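/- Let P, Q, P̂, Q̂ be probability measures on a measurable space such that P̂ and Q̂ admit densities p̂, q̂ with respect to a common σ-finite measure ν, let λ ≥ 0, and let A = {z : λ·p̂(z) ≥ q̂(z)} be the plug-in likelihood-ratio classification set. Then λ·P(Aᶜ) + Q(A) ≤ ∫ min(λ·p̂, q̂) dν + λ·‖P − P̂‖_TV + ‖Q − Q̂‖_TV; that is, the true λ-weighted classification risk of the plug-in classifier exceeds the plug-in precision α_λ(P̂,Q̂) by at most λ‖P − P̂‖_TV + ‖Q − Q̂‖_TV. -/

import Mathlib

open MeasureTheory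

/-- The total variation norm of a finite signed measure:
`‖μ‖_TV = (1/2)·|μ|(univ)`, where `|μ|` is the total variation measure
(this matches `(1/2)·sup_A (μ(A) − μ(Aᶜ))`; for probability measures `P, P̂` this equals
`sup_A (P(A) − P̂(A))`). -/
noncomputable def tvNorm {α : Type*} [MeasurableSpace α] (μ : SignedMeasure α) : ℝ :=
  (μ.totalVariation Set.univ).toReal / 2

lemma tv_bound {α : Type*} [MeasurableSpace α] (P P' : Measure α)
    [IsProbabilityMeasure P] [IsProbabilityMeasure P'] {A : Set α} (hA : MeasurableSet A) :
    (P A).toReal ≤ (P' A).toReal + tvNorm (P.toSignedMeasure - P'.toSignedMeasure) := by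
  set s := P.toSignedMeasure - P'.toSignedMeasure with hs
  set j := s.toJordanDecomposition with hj
  have hspec : ∀ B : Set α, MeasurableSet B → s B = (j.posPart B).toReal - (j.negPart B).toReal := by
    intro B hB
    conv_lhs => rw [← s.toSignedMeasure_toJordanDecomposition]
    rw [JordanDecomposition.toSignedMeasure, VectorMeasure.sub_apply,
      Measure.toSignedMeasure_apply_measurable hB, Measure.toSignedMeasure_apply_measurable hB]
    rfl
  have huniv : s Set.univ = 0 := by
    rw [hs, Measure.toSignedMeasure_sub_apply MeasurableSet.univ]
    simp
  have heq : (j.posPart Set.univ).toReal = (j.negPart Set.univ).toReal := by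
    have := hspec Set.univ MeasurableSet.univ
    rw [huniv] at this; linarith
  have htv : tvNorm s = (j.posPart Set.univ).toReal := by
    rw [tvNorm, SignedMeasure.totalVariation, Measure.add_apply, ENNReal.toReal_add
      (measure_ne_top _ _) (measure_ne_top _ _), ← hj, heq]
    ring
  have hsA : s A = (P A).toReal - (P' A).toReal := by
    rw [hs, Measure.toSignedMeasure_sub_apply hA]
    rfl
  have h1 : s A ≤ (j.posPart Set.univ).toReal := by
    rw [hspec A hA]
    have h2 : (j.posPart A).toReal ≤ (j.posPart Set.univ).toReal :=
      ENNReal.toReal_mono (measure_ne_top _ _) (measure_mono (Set.subset_univ A))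
    have h3 : 0 ≤ (j.negPart A).toReal := ENNReal.toReal_nonneg
    linarith
  rw [htv]; rw [hsA] at h1; linarith

lemma density_toReal {α : Type*} [MeasurableSpace α] (ν : Measure α)
    (f : α → ℝ) (hf0 : ∀ x, 0 ≤ f x) (hfint : Integrable f ν)
    {B : Set α} (hB : MeasurableSet B) :
    ((ν.withDensity (fun x => ENNReal.ofReal (f x))) B).toReal = ∫ x in B, f x ∂ν := by
  rw [withDensity_apply _ hB]
  rw [← ofReal_integral_eq_lintegral_ofReal (hfint.restrict)
    (Filter.Eventually.of_forall hf0)]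
  exact ENNReal.toReal_ofReal (integral_nonneg (fun x => hf0 x))

/-- Let `P, Q, P̂, Q̂` be probability measures, with `P̂`, `Q̂` admitting
densities `p̂`, `q̂` with respect to a common σ-finite measure `ν`, let `λ ≥ 0`, and let
`A = {z : λ·p̂(z) ≥ q̂(z)}` be the plug-in likelihood-ratio classification set. Then the true
`λ`-weighted classification risk of the plug-in classifier exceeds the plug-in precision
`α_λ(P̂,Q̂) = ∫ min(λ·p̂, q̂) dν` by at most `λ‖P − P̂‖_TV + ‖Q − Q̂‖_TV`:
`λ·P(Aᶜ) + Q(A) ≤ ∫ min(λ·p̂, q̂) dν + λ‖P − P̂‖_TV + ‖Q − Q̂‖_TV`. -/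
theorem plugin_classifier_excess_risk_bound
    {α : Type*} [MeasurableSpace α] (ν : Measure α) [SigmaFinite ν]
    (P Q Phat Qhat : Measure α)
    [IsProbabilityMeasure P] [IsProbabilityMeasure Q]
    [IsProbabilityMeasure Phat] [IsProbabilityMeasure Qhat]
    (phat qhat : α → ℝ) (hp0 : ∀ x, 0 ≤ phat x) (hq0 : ∀ x, 0 ≤ qhat x)
    (hpmeas : Measurable phat) (hqmeas : Measurable qhat)
    (hpint : Integrable phat ν) (hqint : Integrable qhat ν)
    (hPhat : Phat = ν.withDensity (fun x => ENNReal.ofReal (phat x)))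
    (hQhat : Qhat = ν.withDensity (fun x => ENNReal.ofReal (qhat x)))
    (l : ℝ) (hl : 0 ≤ l) :
    l * (P {z | l * phat z ≥ qhat z}ᶜ).toReal + (Q {z | l * phat z ≥ qhat z}).toReal
      ≤ ∫ z, min (l * phat z) (qhat z) ∂ν
        + l * tvNorm (P.toSignedMeasure - Phat.toSignedMeasure)
        + tvNorm (Q.toSignedMeasure - Qhat.toSignedMeasure) := by
  set A : Set α := {z | l * phat z ≥ qhat z} with hAdef
  have hA : MeasurableSet A := measurableSet_le hqmeas (hpmeas.const_mul l)
  have hmin : Integrable (fun z => min (l * phat z) (qhat z)) ν := (hpint.const_mul l).inf hqint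
  have hsplit : ∫ z, min (l * phat z) (qhat z) ∂ν
      = (∫ z in A, min (l * phat z) (qhat z) ∂ν) + ∫ z in Aᶜ, min (l * phat z) (qhat z) ∂ν :=
    (integral_add_compl hA hmin).symm
  have hIA : ∫ z in A, min (l * phat z) (qhat z) ∂ν = ∫ z in A, qhat z ∂ν := by
    refine setIntegral_congr_fun hA (fun x hx => ?_)
    exact min_eq_right hx
  have hIAc : ∫ z in Aᶜ, min (l * phat z) (qhat z) ∂ν = l * ∫ z in Aᶜ, phat z ∂ν := by
    rw [← integral_const_mul]
    refine setIntegral_congr_fun hA.compl (fun x hx => ?_)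
    exact min_eq_left (le_of_lt (lt_of_not_ge hx))
  have hPhatAc : (Phat Aᶜ).toReal = ∫ z in Aᶜ, phat z ∂ν := by
    rw [hPhat]; exact density_toReal ν phat hp0 hpint hA.compl
  have hQhatA : (Qhat A).toReal = ∫ z in A, qhat z ∂ν := by
    rw [hQhat]; exact density_toReal ν qhat hq0 hqint hA
  have hbP : (P Aᶜ).toReal ≤ (Phat Aᶜ).toReal
      + tvNorm (P.toSignedMeasure - Phat.toSignedMeasure) := tv_bound P Phat hA.compl
  have hbQ : (Q A).toReal ≤ (Qhat A).toReal
      + tvNorm (Q.toSignedMeasure - Qhat.toSignedMeasure) := tv_bound Q Qhat hA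
  have hbP' := mul_le_mul_of_nonneg_left hbP hl
  rw [hsplit, hIA, hIAc, ← hPhatAc, ← hQhatA]
  nlinarith [hbP', hbQ]
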